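/- Let k be a positive integer and let u : (0,1) → {−1,1} be piecewise constant with at most k jumps, i.e. there exist points 0 = t₀ ≤ t₁ ≤ … ≤ t_k ≤ t_{k+1} = 1 such that u is constant on each nonempty open interval (t_i, t_{i+1}). Assume ∫₀¹ u(t) dt = 0 and set w(y) = ∫₀^y u(t) dt. Then ∫₀¹ w(y)² dy ≥ 1/(12k²), with equality if and only if u = u_k or u = −u_k almost everywhere. -/

import Mathlib

open MeasureTheory intervalIntegral

/-- The lamellar configuration `u_k`: equals `(-1)^j` on `(y_j, y_{j+1})` where
`y_j = (2j-1)/(2k)`, `y_0 = 0`, `y_{k+1} = 1`. -/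
noncomputable def uk (k : ℕ) (t : ℝ) : ℝ := (-1 : ℝ) ^ ⌊(k : ℝ) * t + 1 / 2⌋

open Set

namespace Stmt5

lemma jensen3 {ι : Type*} (s : Finset ι) (w x : ι → ℝ)
    (hw : ∀ i ∈ s, 0 < w i) (hx : ∀ i ∈ s, 0 ≤ x i)
    (hW : 0 < ∑ i ∈ s, w i) :
    (∑ i ∈ s, w i * x i)^3 ≤ (∑ i ∈ s, w i)^2 * (∑ i ∈ s, w i * (x i)^3) ∧
    ((∑ i ∈ s, w i * x i)^3 = (∑ i ∈ s, w i)^2 * (∑ i ∈ s, w i * (x i)^3) →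
      ∀ i ∈ s, x i = (∑ j ∈ s, w j * x j) / (∑ j ∈ s, w j)) := by
  set W := ∑ i ∈ s, w i with hWdef
  set P := ∑ i ∈ s, w i * x i with hPdef
  obtain ⟨a, hadef⟩ : ∃ a : ℝ, a = P / W := ⟨_, rfl⟩
  have hP : 0 ≤ P := Finset.sum_nonneg fun i hi => mul_nonneg (hw i hi).le (hx i hi)
  have ha : 0 ≤ a := hadef ▸ div_nonneg hP hW.le
  have haW : a * W = P := by rw [hadef]; exact div_mul_cancel₀ P hW.ne'
  have key : ∀ i ∈ s, w i * (a^3 + 3*a^2*(x i - a)) ≤ w i * (x i)^3 := by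
    intro i hi
    have h1 : 0 ≤ (x i - a)^2 * (x i + 2*a) :=
      mul_nonneg (sq_nonneg _) (by linarith [hx i hi])
    nlinarith [(hw i hi).le, h1]
  have hsum : ∑ i ∈ s, w i * (a^3 + 3*a^2*(x i - a)) ≤ ∑ i ∈ s, w i * (x i)^3 :=
    Finset.sum_le_sum key
  have hlin : ∑ i ∈ s, w i * (a^3 + 3*a^2*(x i - a)) = W * a^3 := by
    calc ∑ i ∈ s, w i * (a^3 + 3*a^2*(x i - a))
        = ∑ i ∈ s, ((a^3 - 3*a^3) * w i + 3*a^2 * (w i * x i)) :=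
          Finset.sum_congr rfl (fun i _ => by ring)
      _ = (a^3 - 3*a^3) * W + 3*a^2 * P := by
          rw [Finset.sum_add_distrib, ← Finset.mul_sum, ← Finset.mul_sum]
      _ = W * a^3 := by linear_combination (-3)*a^2*haW
  have hge : W * a^3 ≤ ∑ i ∈ s, w i * (x i)^3 := hlin ▸ hsum
  have hP3 : P^3 = W^2 * (W * a^3) := by linear_combination (P^2 + P*(a*W) + (a*W)^2) * haW.symm
  constructor
  · calc P^3 = W^2 * (W*a^3) := hP3
      _ ≤ W^2 * (∑ i ∈ s, w i * (x i)^3) := by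
          apply mul_le_mul_of_nonneg_left hge (sq_nonneg W)
  · intro heq i hi
    have hSeq : ∑ i ∈ s, w i * (a^3 + 3*a^2*(x i - a)) = ∑ i ∈ s, w i * (x i)^3 := by
      rw [hlin]
      have : W^2 * (W*a^3) = W^2 * (∑ i ∈ s, w i * (x i)^3) := by rw [← hP3, heq]
      have hW2 : (0:ℝ) < W^2 := by positivity
      exact mul_left_cancel₀ hW2.ne' this
    have hterm := (Finset.sum_eq_sum_iff_of_le key).mp hSeq i hi
    have hwne : w i ≠ 0 := (hw i hi).ne'
    have h2 : a^3 + 3*a^2*(x i - a) = (x i)^3 := mul_left_cancel₀ hwne hterm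
    have hpoly : (x i - a)^2 * (x i + 2*a) = 0 := by nlinarith [h2]
    have hxa : x i = a := by
      rcases mul_eq_zero.mp hpoly with h | h
      · have := sq_eq_zero_iff.mp h; linarith
      · have hx0 : x i = 0 := by nlinarith [hx i hi]
        have ha0 : a = 0 := by nlinarith [hx i hi]
        rw [hx0, ha0]
    rw [hxa, hadef]

lemma sum_split (m : ℕ) (f : ℕ → ℝ) :
    ∑ j ∈ Finset.range (m+2), f j = f 0 + (∑ j ∈ Finset.range m, f (j+1)) + f (m+1) := by
  rw [Finset.sum_range_succ, Finset.sum_range_succ']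
  ring

lemma cube_abs (a b : ℝ) : |b^3 - a^3| = |b - a| * ((b-a)^2/4 + 3*(a+b)^2/4) := by
  have h1 : b^3 - a^3 = (b-a)*((b-a)^2/4 + 3*(a+b)^2/4) := by ring
  rw [h1, abs_mul,
    abs_of_nonneg (show (0:ℝ) ≤ (b-a)^2/4 + 3*(a+b)^2/4 by positivity)]

lemma abs_cube (x : ℝ) : |x|^3 = |x| * x^2 := by
  rcases abs_cases x with ⟨h,_⟩ | ⟨h,_⟩ <;> rw [h] <;> ring


lemma discrete (m : ℕ) (e : ℕ → ℝ) (h0 : e 0 = 0) (hend : e (m+2) = 0)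
    (hL : ∑ j ∈ Finset.range (m+2), |e (j+1) - e j| = 1) :
    1 ≤ 4*((m:ℝ)+1)^2 * ∑ j ∈ Finset.range (m+2), |e (j+1)^3 - e j^3| ∧
    (4*((m:ℝ)+1)^2 * ∑ j ∈ Finset.range (m+2), |e (j+1)^3 - e j^3| = 1 →
      (∀ j, 1 ≤ j → j ≤ m+1 → e j = (-1:ℝ)^(j+1) * e 1) ∧ |e 1| = 1/(2*((m:ℝ)+1))) := by
  classical
  set ℓ : ℕ → ℝ := fun j => |e (j+1) - e j| with hldef
  set w : ℕ → ℝ := fun j => if j = 0 ∨ j = m+1 then (1/2 : ℝ) else 1 with hwdef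
  set x : ℕ → ℝ := fun j => (if j = 0 ∨ j = m+1 then (2:ℝ) else 1) * ℓ j with hxdef
  have hwpos : ∀ j ∈ Finset.range (m+2), 0 < w j := by
    intro j _
    by_cases h : j = 0 ∨ j = m+1 <;> simp [hwdef, h]
  have hxnn : ∀ j ∈ Finset.range (m+2), 0 ≤ x j := by
    intro j _
    have : 0 ≤ ℓ j := abs_nonneg _
    by_cases h : j = 0 ∨ j = m+1 <;> simp [hxdef, h] <;> positivity
  have hwx : ∀ j, w j * x j = ℓ j := by
    intro j
    by_cases h : j = 0 ∨ j = m+1 <;> simp [hwdef, hxdef, h] <;> ring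
  have hsumw : ∑ j ∈ Finset.range (m+2), w j = (m:ℝ)+1 := by
    rw [sum_split]
    have h1 : w 0 = 1/2 := by simp [hwdef]
    have h2 : w (m+1) = 1/2 := by simp [hwdef]
    have h3 : ∀ j ∈ Finset.range m, w (j+1) = 1 := by
      intro j hj
      have := Finset.mem_range.mp hj
      simp only [hwdef]
      rw [if_neg (by omega)]
    rw [h1, h2, Finset.sum_congr rfl h3, Finset.sum_const, Finset.card_range,
      nsmul_eq_mul, mul_one]
    ring
  have hsumwx : ∑ j ∈ Finset.range (m+2), w j * x j = 1 := by
    rw [Finset.sum_congr rfl (fun j _ => hwx j)]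
    exact hL
  have hterm : ∀ j ∈ Finset.range (m+2), (1/4) * (w j * (x j)^3) ≤ |e (j+1)^3 - e j^3| := by
    intro j hj
    by_cases h0j : j = 0
    · subst h0j
      have hw0 : w 0 = 1/2 := by simp [hwdef]
      have hx0 : x 0 = 2 * |e 1 - e 0| := by simp [hxdef, hldef]
      show (1:ℝ)/4 * (w 0 * (x 0)^3) ≤ |e 1^3 - e 0^3|
      rw [hw0, hx0, h0, sub_zero, show e 1 ^3 - (0:ℝ)^3 = e 1^3 by ring, abs_pow]
      apply le_of_eq
      ring
    by_cases hmj : j = m+1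
    · subst hmj
      have hwm : w (m+1) = 1/2 := by simp [hwdef]
      have hxm : x (m+1) = 2 * |e (m+2) - e (m+1)| := by simp [hxdef, hldef]
      show (1:ℝ)/4 * (w (m+1) * (x (m+1))^3) ≤ |e (m+2)^3 - e (m+1)^3|
      rw [hwm, hxm, hend, zero_sub, abs_neg,
        show (0:ℝ)^3 - e (m+1)^3 = -(e (m+1)^3) by ring, abs_neg, abs_pow]
      apply le_of_eq
      ring
    · have hne : ¬(j = 0 ∨ j = m+1) := by omega
      have hwj : w j = 1 := by simp only [hwdef]; rw [if_neg hne]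
      have hxj : x j = |e (j+1) - e j| := by
        simp only [hxdef, hldef]; rw [if_neg hne, one_mul]
      rw [hwj, hxj, one_mul, cube_abs, abs_cube]
      nlinarith [abs_nonneg (e (j+1) - e j), sq_nonneg (e j + e (j+1)),
        mul_nonneg (abs_nonneg (e (j+1) - e j)) (sq_nonneg (e j + e (j+1)))]
  have hTS : (1/4) * (∑ j ∈ Finset.range (m+2), w j * (x j)^3)
      ≤ ∑ j ∈ Finset.range (m+2), |e (j+1)^3 - e j^3| := by
    rw [Finset.mul_sum]
    exact Finset.sum_le_sum hterm
  have hWpos : (0:ℝ) < ∑ j ∈ Finset.range (m+2), w j := by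
    rw [hsumw]; positivity
  obtain ⟨hj1, hj2⟩ := jensen3 (Finset.range (m+2)) w x hwpos hxnn hWpos
  rw [hsumwx, hsumw, one_pow] at hj1 hj2
  set T := ∑ j ∈ Finset.range (m+2), w j * (x j)^3 with hTdef
  set S := ∑ j ∈ Finset.range (m+2), |e (j+1)^3 - e j^3| with hSdef
  have hm1pos : (0:ℝ) < ((m:ℝ)+1)^2 := by positivity
  constructor
  · nlinarith [mul_le_mul_of_nonneg_left hTS (le_of_lt hm1pos), hj1]
  · intro heq
    -- both inequalities are equalities
    have hup : ((m:ℝ)+1)^2 * T ≤ 1 := by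
      nlinarith [mul_le_mul_of_nonneg_left hTS (le_of_lt hm1pos), heq]
    have hTeq : ((m:ℝ)+1)^2 * T = 1 := le_antisymm hup hj1
    have hT4S : T = 4 * S := by
      have h5 : ((m:ℝ)+1)^2 * T = ((m:ℝ)+1)^2 * (4*S) := by
        linear_combination hTeq - heq
      exact mul_left_cancel₀ hm1pos.ne' h5
    have hxall : ∀ j ∈ Finset.range (m+2), x j = 1 / ((m:ℝ)+1) :=
      fun j hjm => hj2 hTeq.symm j hjm
    have htermeq : ∀ j ∈ Finset.range (m+2), (1/4) * (w j * (x j)^3) = |e (j+1)^3 - e j^3| := by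
      have hsum2 : ∑ j ∈ Finset.range (m+2), (1/4) * (w j * (x j)^3)
          = ∑ j ∈ Finset.range (m+2), |e (j+1)^3 - e j^3| := by
        rw [← Finset.mul_sum, ← hTdef, ← hSdef, hT4S]; ring
      exact fun j hj => (Finset.sum_eq_sum_iff_of_le hterm).mp hsum2 j hj
    have hlpos : (0:ℝ) < 1/((m:ℝ)+1) := by positivity
    -- interior sign flips
    have hneg : ∀ j, 1 ≤ j → j ≤ m → e (j+1) = - e j := by
      intro j hj1' hjm
      have hjmem : j ∈ Finset.range (m+2) := Finset.mem_range.mpr (by omega)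
      have hne : ¬(j = 0 ∨ j = m+1) := by omega
      have hwj : w j = 1 := by simp only [hwdef]; rw [if_neg hne]
      have hxj : x j = |e (j+1) - e j| := by
        simp only [hxdef, hldef]; rw [if_neg hne, one_mul]
      have habs : |e (j+1) - e j| = 1/((m:ℝ)+1) := by
        rw [← hxj]; exact hxall j hjmem
      have heqj := htermeq j hjmem
      rw [hwj, hxj, one_mul, cube_abs, abs_cube, habs] at heqj
      have hz : (e j + e (j+1))^2 * (1/((m:ℝ)+1)) = 0 := by
        linear_combination (-4/3 : ℝ) * heqj
      have hzero : (e j + e (j+1))^2 = 0 := by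
        rcases mul_eq_zero.mp hz with h | h
        · exact h
        · exact absurd h (by positivity)
      have := sq_eq_zero_iff.mp hzero
      linarith
    have he1 : |e 1| = 1/(2*((m:ℝ)+1)) := by
      have h0mem : (0:ℕ) ∈ Finset.range (m+2) := Finset.mem_range.mpr (by omega)
      have hx0' : x 0 = 1/((m:ℝ)+1) := hxall 0 h0mem
      have hx0 : x 0 = 2 * |e 1 - e 0| := by simp [hxdef, hldef]
      rw [hx0, h0, sub_zero] at hx0'
      rw [eq_div_iff (by positivity : (2:ℝ)*((m:ℝ)+1) ≠ 0)]
      rw [eq_div_iff (by positivity : ((m:ℝ)+1) ≠ 0)] at hx0'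
      linear_combination hx0'
    refine ⟨?_, he1⟩
    intro j
    induction j with
    | zero => intro h _; exact absurd h (by norm_num)
    | succ jj ih =>
      intro _ hjm1
      by_cases hjj : jj = 0
      · subst hjj; norm_num
      · have h1 : e (jj+1) = - e jj := hneg jj (by omega) (by omega)
        have h2 : e jj = (-1:ℝ)^(jj+1) * e 1 := ih (by omega) (by omega)
        rw [h1, h2, pow_succ]
        ring


noncomputable def cc (t : ℕ → ℝ) (u : ℝ → ℝ) (i : ℕ) : ℝ := u ((t i + t (i+1))/2)

noncomputable def gfun (n : ℕ) (t : ℕ → ℝ) (u : ℝ → ℝ) : ℝ → ℝ :=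
  fun s => ∑ i ∈ Finset.range n, Set.indicator (Ioo (t i) (t (i+1))) (fun _ => cc t u i) s

variable {n : ℕ} {t : ℕ → ℝ} {u : ℝ → ℝ}

lemma tmono (hmono : ∀ i < n, t i ≤ t (i+1)) :
    ∀ j, j ≤ n → ∀ i, i ≤ j → t i ≤ t j := by
  intro j
  induction j with
  | zero =>
    intro _ i hi
    have h : i = 0 := Nat.le_zero.mp hi
    rw [h]
  | succ jj ih =>
    intro hjn i hij
    by_cases h : i = jj + 1
    · rw [h]
    · exact le_trans (ih (by omega) i (by omega)) (hmono jj (by omega))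

lemma tmem (ht0 : t 0 = 0) (htn : t n = 1) (hmono : ∀ i < n, t i ≤ t (i+1))
    {i : ℕ} (hi : i ≤ n) : t i ∈ Icc (0:ℝ) 1 :=
  ⟨by rw [← ht0]; exact tmono hmono i hi 0 (Nat.zero_le _),
   by rw [← htn]; exact tmono hmono n le_rfl i hi⟩

lemma cover (ht0 : t 0 = 0) (htn : t n = 1) (hmono : ∀ i < n, t i ≤ t (i+1))
    (hn : 1 ≤ n) {s : ℝ} (hs0 : 0 ≤ s) (hs1 : s ≤ 1) :
    ∃ i, i < n ∧ t i ≤ s ∧ s ≤ t (i+1) := by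
  classical
  have h0P : t 0 ≤ s := by rw [ht0]; exact hs0
  set i := Nat.findGreatest (fun j => t j ≤ s) (n-1) with hidef
  have hi_le : i ≤ n-1 := Nat.findGreatest_le _
  have hPi : t i ≤ s := by
    rw [hidef]
    exact Nat.findGreatest_spec (P := fun j => t j ≤ s) (Nat.zero_le _) h0P
  refine ⟨i, by omega, hPi, ?_⟩
  by_cases h : i = n - 1
  · have h2 : i + 1 = n := by omega
    rw [h2, htn]; exact hs1
  · have hng : ¬ (t (i+1) ≤ s) := by
      have hlt : Nat.findGreatest (fun j => t j ≤ s) (n-1) < i + 1 := by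
        rw [← hidef]; omega
      exact Nat.findGreatest_is_greatest hlt (by omega)
    linarith [not_le.mp hng]

lemma upiece (hconst : ∀ i < n, ∀ x ∈ Ioo (t i) (t (i+1)), ∀ y ∈ Ioo (t i) (t (i+1)), u x = u y)
    {i : ℕ} (hi : i < n) {s : ℝ} (hs : s ∈ Ioo (t i) (t (i+1))) : u s = cc t u i := by
  obtain ⟨h1, h2⟩ := hs
  have hmid : (t i + t (i+1))/2 ∈ Ioo (t i) (t (i+1)) := by
    constructor <;> [linarith; linarith]
  exact hconst i hi s ⟨h1, h2⟩ _ hmid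

lemma ccval (ht0 : t 0 = 0) (htn : t n = 1) (hmono : ∀ i < n, t i ≤ t (i+1))
    (huval : ∀ s ∈ Set.Ioo (0 : ℝ) 1, u s = 1 ∨ u s = -1)
    {i : ℕ} (hi : i < n) (hlt : t i < t (i+1)) : cc t u i = 1 ∨ cc t u i = -1 := by
  apply huval
  have h1 := (tmem ht0 htn hmono (le_of_lt hi)).1
  have h2 := (tmem ht0 htn hmono (by omega : i+1 ≤ n)).2
  constructor <;> [linarith; linarith]

lemma gfun_integrable : Integrable (gfun n t u) volume := by
  apply MeasureTheory.integrable_finset_sum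
  intro i _
  rw [integrable_indicator_iff measurableSet_Ioo]
  apply (integrableOn_const_iff (C := cc t u i)).mpr
  right
  exact measure_Ioo_lt_top

lemma u_eq_g (ht0 : t 0 = 0) (htn : t n = 1) (hmono : ∀ i < n, t i ≤ t (i+1)) (hn : 1 ≤ n)
    (hconst : ∀ i < n, ∀ x ∈ Ioo (t i) (t (i+1)), ∀ y ∈ Ioo (t i) (t (i+1)), u x = u y) :
    ∀ᵐ s, s ∈ Ioo (0:ℝ) 1 → u s = gfun n t u s := by
  have hnull : volume (⋃ i ∈ Finset.range (n+1), ({t i} : Set ℝ)) = 0 :=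
    Set.Countable.measure_zero
      (Set.Countable.biUnion (Finset.countable_toSet _) (fun _ _ => Set.countable_singleton _)) _
  rw [MeasureTheory.ae_iff]
  apply measure_mono_null _ hnull
  intro s hsbad
  simp only [Set.mem_setOf_eq] at hsbad
  push_neg at hsbad
  obtain ⟨hs01, hneq⟩ := hsbad
  by_contra hnot
  simp only [Set.mem_iUnion, Set.mem_singleton_iff, not_exists] at hnot
  obtain ⟨i, hi, h1, h2⟩ := cover ht0 htn hmono hn (le_of_lt hs01.1) (le_of_lt hs01.2)
  have hne1 : s ≠ t i := fun h => hnot i (Finset.mem_range.mpr (by omega)) h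
  have hne2 : s ≠ t (i+1) := fun h => hnot (i+1) (Finset.mem_range.mpr (by omega)) h
  have hlt1 : t i < s := lt_of_le_of_ne h1 (fun h => hne1 h.symm)
  have hlt2 : s < t (i+1) := lt_of_le_of_ne h2 hne2
  apply hneq
  rw [upiece hconst hi ⟨hlt1, hlt2⟩]
  unfold gfun
  symm
  have hsum : ∑ j ∈ Finset.range n, Set.indicator (Ioo (t j) (t (j+1))) (fun _ => cc t u j) s
      = Set.indicator (Ioo (t i) (t (i+1))) (fun _ => cc t u i) s := by
    apply Finset.sum_eq_single_of_mem i (Finset.mem_range.mpr hi)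
    intro j hj hji
    have hnm : s ∉ Ioo (t j) (t (j+1)) := by
      intro hmem
      obtain ⟨hj1, hj2⟩ := hmem
      have hjn := Finset.mem_range.mp hj
      rcases lt_or_gt_of_ne hji with h | h
      · have hle : t (j+1) ≤ t i := tmono hmono i (by omega) (j+1) (by omega)
        linarith
      · have hle : t (i+1) ≤ t j := tmono hmono j (by omega) (i+1) (by omega)
        linarith
    exact Set.indicator_of_notMem hnm _
  rw [hsum, Set.indicator_apply]
  exact if_pos (⟨hlt1, hlt2⟩ : s ∈ Ioo (t i) (t (i+1)))

lemma u_intInt (ht0 : t 0 = 0) (htn : t n = 1) (hmono : ∀ i < n, t i ≤ t (i+1)) (hn : 1 ≤ n)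
    (hconst : ∀ i < n, ∀ x ∈ Ioo (t i) (t (i+1)), ∀ y ∈ Ioo (t i) (t (i+1)), u x = u y)
    {a b : ℝ} (ha : a ∈ Icc (0:ℝ) 1) (hb : b ∈ Icc (0:ℝ) 1) :
    IntervalIntegrable u volume a b := by
  have hg : IntervalIntegrable (gfun n t u) volume a b :=
    gfun_integrable.intervalIntegrable
  apply hg.congr_ae
  have h1 : ∀ᵐ s ∂(volume.restrict (Set.uIoc a b)), s ∈ Ioo (0:ℝ) 1 → u s = gfun n t u s :=
    ae_restrict_of_ae (u_eq_g ht0 htn hmono hn hconst)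
  have h2 : ∀ᵐ s ∂(volume.restrict (Set.uIoc a b)), s ∈ Set.uIoc a b := ae_restrict_mem measurableSet_uIoc
  have h3 : ∀ᵐ s ∂(volume.restrict (Set.uIoc a b)), s ≠ max a b := by
    apply ae_restrict_of_ae
    rw [MeasureTheory.ae_iff]
    have he : {s : ℝ | ¬ s ≠ max a b} = {max a b} := by ext z; simp
    rw [he]
    exact Real.volume_singleton
  filter_upwards [h1, h2, h3] with s hs1 hs2 hs3
  symm
  apply hs1
  rw [Set.mem_uIoc] at hs2
  have hmax : max a b ≤ 1 := max_le ha.2 hb.2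
  rcases hs2 with ⟨h4, h5⟩ | ⟨h4, h5⟩
  · refine ⟨lt_of_le_of_lt ha.1 h4, ?_⟩
    have : s < max a b := lt_of_le_of_ne (le_trans h5 (le_max_right a b)) hs3
    linarith
  · refine ⟨lt_of_le_of_lt hb.1 h4, ?_⟩
    have : s < max a b := lt_of_le_of_ne (le_trans h5 (le_max_left a b)) hs3
    linarith

lemma W_piece (ht0 : t 0 = 0) (htn : t n = 1) (hmono : ∀ i < n, t i ≤ t (i+1)) (hn : 1 ≤ n)
    (hconst : ∀ i < n, ∀ x ∈ Ioo (t i) (t (i+1)), ∀ y ∈ Ioo (t i) (t (i+1)), u x = u y)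
    {i : ℕ} (hi : i < n) {y : ℝ} (hy : y ∈ Icc (t i) (t (i+1))) :
    ∫ s in (0:ℝ)..y, u s = (∫ s in (0:ℝ)..t i, u s) + cc t u i * (y - t i) := by
  have hti : t i ∈ Icc (0:ℝ) 1 := tmem ht0 htn hmono (le_of_lt hi)
  have hti1 : t (i+1) ∈ Icc (0:ℝ) 1 := tmem ht0 htn hmono (by omega)
  have hy01 : y ∈ Icc (0:ℝ) 1 := ⟨le_trans hti.1 hy.1, le_trans hy.2 hti1.2⟩
  have h0m : (0:ℝ) ∈ Icc (0:ℝ) 1 := by norm_num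
  have hadd := integral_add_adjacent_intervals
    (u_intInt ht0 htn hmono hn hconst h0m hti) (u_intInt ht0 htn hmono hn hconst hti hy01)
  have hconst' : ∫ s in t i..y, u s = cc t u i * (y - t i) := by
    have heq : ∫ s in t i..y, u s = ∫ s in t i..y, cc t u i := by
      apply intervalIntegral.integral_congr_ae
      have hae : ∀ᵐ s : ℝ, s ≠ y := by
        rw [MeasureTheory.ae_iff]
        have he : {s : ℝ | ¬ s ≠ y} = {y} := by ext z; simp
        rw [he]
        exact Real.volume_singleton
      filter_upwards [hae] with s hsy hsmem
      rw [Set.mem_uIoc] at hsmem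
      have hsIoo : s ∈ Ioo (t i) (t (i+1)) := by
        rcases hsmem with ⟨h4, h5⟩ | ⟨h4, h5⟩
        · exact ⟨h4, lt_of_lt_of_le (lt_of_le_of_ne h5 hsy) hy.2⟩
        · exfalso; linarith [hy.1]
      exact upiece hconst hi hsIoo
    rw [heq, intervalIntegral.integral_const, smul_eq_mul]
    ring
  linarith [hadd, hconst']

lemma master_step (ht0 : t 0 = 0) (htn : t n = 1) (hmono : ∀ i < n, t i ≤ t (i+1)) (hn : 1 ≤ n)
    (hconst : ∀ i < n, ∀ x ∈ Ioo (t i) (t (i+1)), ∀ y ∈ Ioo (t i) (t (i+1)), u x = u y)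
    {i : ℕ} (hi : i < n) :
    (∫ s in (0:ℝ)..t (i+1), u s) - (∫ s in (0:ℝ)..t i, u s) = cc t u i * (t (i+1) - t i) := by
  have := W_piece ht0 htn hmono hn hconst hi (⟨hmono i hi, le_rfl⟩ : t (i+1) ∈ Icc (t i) (t (i+1)))
  linarith

lemma poly_integral (a b C L : ℝ) :
    ∫ z in (0:ℝ)..L, (a + b*z + C*z^2) = a*L + b*L^2/2 + C*L^3/3 := by
  have h1 : IntervalIntegrable (fun z : ℝ => a + b*z) volume 0 L :=
    (continuous_const.add (continuous_const.mul continuous_id')).intervalIntegrable _ _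
  have h2 : IntervalIntegrable (fun z : ℝ => C*z^2) volume 0 L :=
    (continuous_const.mul (continuous_pow 2)).intervalIntegrable _ _
  have h3 : IntervalIntegrable (fun _ : ℝ => (a:ℝ)) volume 0 L := intervalIntegrable_const
  have h4 : IntervalIntegrable (fun z : ℝ => b*z) volume 0 L :=
    (continuous_const.mul continuous_id').intervalIntegrable _ _
  rw [integral_add h1 h2, integral_add h3 h4, intervalIntegral.integral_const,
    intervalIntegral.integral_const_mul, integral_id, intervalIntegral.integral_const_mul,
    integral_pow]
  push_cast
  simp only [smul_eq_mul]
  ring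

lemma Wsq_piece (ht0 : t 0 = 0) (htn : t n = 1) (hmono : ∀ i < n, t i ≤ t (i+1)) (hn : 1 ≤ n)
    (hconst : ∀ i < n, ∀ x ∈ Ioo (t i) (t (i+1)), ∀ y ∈ Ioo (t i) (t (i+1)), u x = u y)
    (huval : ∀ s ∈ Set.Ioo (0 : ℝ) 1, u s = 1 ∨ u s = -1)
    {i : ℕ} (hi : i < n) :
    ∫ y in (t i)..(t (i+1)), (∫ s in (0:ℝ)..y, u s)^2
      = cc t u i * ((∫ s in (0:ℝ)..t (i+1), u s)^3 - (∫ s in (0:ℝ)..t i, u s)^3) / 3 := by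
  rcases eq_or_lt_of_le (hmono i hi) with heq | hlt
  · rw [← heq]
    simp [intervalIntegral.integral_same]
  · set A := ∫ s in (0:ℝ)..t i, u s with hA
    set c := cc t u i with hc
    have hB : ∫ s in (0:ℝ)..t (i+1), u s = A + c * (t (i+1) - t i) :=
      W_piece ht0 htn hmono hn hconst hi ⟨hmono i hi, le_rfl⟩
    have h1 : ∫ y in (t i)..(t (i+1)), (∫ s in (0:ℝ)..y, u s)^2
        = ∫ y in (t i)..(t (i+1)), (A + c*(y - t i))^2 := by
      apply intervalIntegral.integral_congr
      intro y hy
      rw [Set.uIcc_of_le (hmono i hi)] at hy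
      exact congrArg (· ^ 2) (W_piece ht0 htn hmono hn hconst hi hy)
    rw [h1]
    have h2 : ∫ y in (t i)..(t (i+1)), (A + c*(y - t i))^2
        = ∫ z in (0:ℝ)..(t (i+1) - t i), (A + c*z)^2 := by
      have h := integral_comp_sub_right (a := t i) (b := t (i+1)) (fun z => (A + c*z)^2) (t i)
      simp only [sub_self] at h
      exact h
    rw [h2]
    have h3 : EqOn (fun z : ℝ => (A + c*z)^2) (fun z : ℝ => A^2 + (2*A*c)*z + c^2*z^2)
        (Set.uIcc 0 (t (i+1) - t i)) := fun z _ => by ring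
    rw [intervalIntegral.integral_congr h3, poly_integral]
    have hcc : c = 1 ∨ c = -1 := ccval ht0 htn hmono huval hi hlt
    rcases hcc with h | h <;> rw [hB, h] <;> ring

lemma Wsq_intInt (ht0 : t 0 = 0) (htn : t n = 1) (hmono : ∀ i < n, t i ≤ t (i+1)) (hn : 1 ≤ n)
    (hconst : ∀ i < n, ∀ x ∈ Ioo (t i) (t (i+1)), ∀ y ∈ Ioo (t i) (t (i+1)), u x = u y)
    {i : ℕ} (hi : i < n) :
    IntervalIntegrable (fun y => (∫ s in (0:ℝ)..y, u s)^2) volume (t i) (t (i+1)) := by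
  have hpoly : IntervalIntegrable
      (fun y => ((∫ s in (0:ℝ)..t i, u s) + cc t u i * (y - t i))^2) volume (t i) (t (i+1)) :=
    Continuous.intervalIntegrable (by continuity) _ _
  apply hpoly.congr_ae
  have h2 : ∀ᵐ s ∂(volume.restrict (Set.uIoc (t i) (t (i+1)))), s ∈ Set.uIoc (t i) (t (i+1)) :=
    ae_restrict_mem measurableSet_uIoc
  filter_upwards [h2] with y hy
  have hmem : y ∈ Icc (t i) (t (i+1)) := by
    rw [Set.mem_uIoc] at hy
    rcases hy with ⟨h4, h5⟩ | ⟨h4, h5⟩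
    · exact ⟨le_of_lt h4, h5⟩
    · exfalso; linarith [hmono i hi]
  exact congrArg (· ^ 2) (W_piece ht0 htn hmono hn hconst hi hmem).symm

lemma master_total (ht0 : t 0 = 0) (htn : t n = 1) (hmono : ∀ i < n, t i ≤ t (i+1)) (hn : 1 ≤ n)
    (hconst : ∀ i < n, ∀ x ∈ Ioo (t i) (t (i+1)), ∀ y ∈ Ioo (t i) (t (i+1)), u x = u y)
    (huval : ∀ s ∈ Set.Ioo (0 : ℝ) 1, u s = 1 ∨ u s = -1) :
    ∫ y in (0:ℝ)..1, (∫ s in (0:ℝ)..y, u s)^2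
      = ∑ i ∈ Finset.range n,
          cc t u i * ((∫ s in (0:ℝ)..t (i+1), u s)^3 - (∫ s in (0:ℝ)..t i, u s)^3) / 3 := by
  have hsum := intervalIntegral.sum_integral_adjacent_intervals
    (f := fun y => (∫ s in (0:ℝ)..y, u s)^2) (μ := volume) (a := t) (n := n)
    (fun i hi => Wsq_intInt ht0 htn hmono hn hconst hi)
  rw [ht0, htn] at hsum
  rw [← hsum]
  exact Finset.sum_congr rfl (fun i hi =>
    Wsq_piece ht0 htn hmono hn hconst huval (Finset.mem_range.mp hi))


-- ### the lamellar partition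
noncomputable def Tk (k : ℕ) (j : ℕ) : ℝ :=
  if j = 0 then 0 else if j ≤ k then (2*(j:ℝ)-1)/(2*(k:ℝ)) else 1

lemma Tk_eval0 (k : ℕ) : Tk k 0 = 0 := by simp [Tk]

lemma Tk_eval {k j : ℕ} (hj1 : 1 ≤ j) (hjk : j ≤ k) :
    Tk k j = (2*(j:ℝ)-1)/(2*(k:ℝ)) := by
  rw [Tk, if_neg (by omega), if_pos hjk]

lemma Tk_evaln (k : ℕ) : Tk k (k+1) = 1 := by
  rw [Tk, if_neg (by omega), if_neg (by omega)]

lemma Tk_lt {k : ℕ} (hk : 1 ≤ k) : ∀ j, j ≤ k → Tk k j < Tk k (j+1) := by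
  intro j hj
  have hk0 : (0:ℝ) < (k:ℝ) := by exact_mod_cast Nat.pos_of_ne_zero (by omega)
  by_cases h0 : j = 0
  · subst h0
    rw [Tk_eval0, Tk_eval (by omega) (by omega)]
    push_cast
    norm_num
    positivity
  · by_cases hlast : j = k
    · subst hlast
      rw [Tk_eval (by omega) le_rfl, Tk_evaln]
      rw [div_lt_one (by positivity)]
      linarith
    · rw [Tk_eval (by omega) hj, Tk_eval (by omega) (by omega)]
      rw [div_lt_div_iff₀ (by positivity) (by positivity)]
      push_cast
      nlinarith
  
lemma Tk_mono {k : ℕ} (hk : 1 ≤ k) : ∀ j, j < k+1 → Tk k j ≤ Tk k (j+1) :=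
  fun j hj => le_of_lt (Tk_lt hk j (by omega))

lemma uk_floor {k j : ℕ} (hk : 1 ≤ k) {s : ℝ}
    (h1 : (2*(j:ℝ)-1)/(2*(k:ℝ)) < s) (h2 : s < (2*(j:ℝ)+1)/(2*(k:ℝ))) :
    uk k s = (-1:ℝ)^j := by
  have hk0 : (0:ℝ) < (k:ℝ) := by exact_mod_cast Nat.pos_of_ne_zero (by omega)
  have hfl : ⌊(k:ℝ)*s + 1/2⌋ = (j:ℤ) := by
    rw [Int.floor_eq_iff]
    constructor
    · rw [div_lt_iff₀ (by positivity)] at h1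
      push_cast
      nlinarith
    · rw [lt_div_iff₀ (by positivity)] at h2
      push_cast
      nlinarith
  rw [uk, hfl, zpow_natCast]

lemma uk_on_piece {k : ℕ} (hk : 1 ≤ k) {j : ℕ} (hj : j ≤ k) {s : ℝ}
    (hs : s ∈ Ioo (Tk k j) (Tk k (j+1))) : uk k s = (-1:ℝ)^j := by
  have hk0 : (0:ℝ) < (k:ℝ) := by exact_mod_cast Nat.pos_of_ne_zero (by omega)
  obtain ⟨hs1, hs2⟩ := hs
  apply uk_floor hk
  · by_cases h0 : j = 0
    · subst h0
      rw [Tk_eval0] at hs1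
      have hneg : (2*((0:ℕ):ℝ)-1)/(2*(k:ℝ)) < 0 := by
        push_cast
        apply div_neg_of_neg_of_pos
        · linarith
        · positivity
      linarith
    · rw [Tk_eval (by omega) hj] at hs1
      exact hs1
  · by_cases hlast : j = k
    · rw [hlast, Tk_evaln] at hs2
      rw [hlast]
      have h1lt : (1:ℝ) < (2*(k:ℝ)+1)/(2*(k:ℝ)) := by
        rw [lt_div_iff₀ (by positivity)]
        linarith
      linarith
    · rw [Tk_eval (by omega) (by omega)] at hs2
      have heq2 : (2*((j:ℝ)+1)-1)/(2*(k:ℝ)) = (2*(j:ℝ)+1)/(2*(k:ℝ)) := by ring_nf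
      push_cast at hs2
      rw [heq2] at hs2
      exact hs2

lemma uk_val (k : ℕ) (s : ℝ) : uk k s = 1 ∨ uk k s = -1 := by
  rcases Int.even_or_odd ⌊(k:ℝ)*s + 1/2⌋ with he | ho
  · left; exact he.neg_one_zpow
  · right; exact ho.neg_one_zpow

lemma uk_hconst {k : ℕ} (hk : 1 ≤ k) :
    ∀ i < k+1, ∀ x ∈ Ioo (Tk k i) (Tk k (i+1)), ∀ y ∈ Ioo (Tk k i) (Tk k (i+1)),
      uk k x = uk k y := by
  intro i hi x hx y hy
  rw [uk_on_piece hk (by omega) hx, uk_on_piece hk (by omega) hy]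

lemma uk_cc {k : ℕ} (hk : 1 ≤ k) {i : ℕ} (hi : i ≤ k) :
    cc (Tk k) (uk k) i = (-1:ℝ)^i := by
  have hlt := Tk_lt hk i hi
  have hmid : (Tk k i + Tk k (i+1))/2 ∈ Ioo (Tk k i) (Tk k (i+1)) := by
    constructor
    · linarith
    · linarith
  exact uk_on_piece hk hi hmid

/-- the value of `∫₀¹ (∫₀ʸ u_k)²`. -/
lemma uk_integral_sq {k : ℕ} (hk : 1 ≤ k) :
    ∫ y in (0:ℝ)..1, (∫ s in (0:ℝ)..y, uk k s)^2 = 1/(12*(k:ℝ)^2) := by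
  have hk0 : (0:ℝ) < (k:ℝ) := by exact_mod_cast Nat.pos_of_ne_zero (by omega)
  set M : ℕ → ℝ := fun j => ∫ s in (0:ℝ)..Tk k j, uk k s with hM
  have hMdef : ∀ j, (∫ s in (0:ℝ)..Tk k j, uk k s) = M j := fun j => rfl
  have hstep : ∀ i, i ≤ k → M (i+1) - M i = (-1:ℝ)^i * (Tk k (i+1) - Tk k i) := by
    intro i hi
    have h := master_step (Tk_eval0 k) (Tk_evaln k) (Tk_mono hk) (by omega) (uk_hconst hk)
      (show i < k+1 by omega)
    rw [uk_cc hk hi] at h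
    exact h
  have hM0 : M 0 = 0 := by
    rw [hM]
    simp only [Tk_eval0]
    exact intervalIntegral.integral_same
  have hMval : ∀ j, 1 ≤ j → j ≤ k → M j = (-1:ℝ)^(j+1) * (1/(2*(k:ℝ))) := by
    intro j
    induction j with
    | zero => intro h _; exact absurd h (by norm_num)
    | succ jj ih =>
      intro _ hjk
      by_cases h0 : jj = 0
      · subst h0
        have h := hstep 0 (by omega)
        rw [hM0, Tk_eval0, Tk_eval (by omega) (by omega)] at h
        push_cast at h ⊢
        linear_combination h
      · have h := hstep jj (by omega)
        have hjj1 : (1:ℕ) ≤ jj := by omega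
        rw [Tk_eval hjj1 (by omega), Tk_eval (by omega) (by omega),
          ih (by omega) (by omega)] at h
        have hexp : M (jj+1) = (-1:ℝ)^(jj+1) * (1/(2*(k:ℝ)))
            + (-1:ℝ)^jj * ((2*((jj:ℝ)+1)-1)/(2*(k:ℝ)) - (2*(jj:ℝ)-1)/(2*(k:ℝ))) := by
          push_cast at h ⊢
          linarith
        rw [hexp]
        have hpow : (-1:ℝ)^(jj+1+1) = (-1:ℝ)^jj := by
          rw [pow_succ, pow_succ]; ring
        rw [hpow, pow_succ]
        field_simp
        ring
  have hMn : M (k+1) = 0 := by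
    have h := hstep k le_rfl
    rw [Tk_evaln, Tk_eval (by omega) le_rfl, hMval k (by omega) le_rfl] at h
    have hpow : (-1:ℝ)^(k+1) = -(-1:ℝ)^k := by rw [pow_succ]; ring
    rw [hpow] at h
    have hres : M (k+1) = -(-1:ℝ)^k * (1/(2*(k:ℝ)))
        + (-1:ℝ)^k * (1 - (2*(k:ℝ)-1)/(2*(k:ℝ))) := by
      linarith
    rw [hres]
    field_simp
    ring
  have htot := master_total (Tk_eval0 k) (Tk_evaln k) (Tk_mono hk) (by omega) (uk_hconst hk)
    (fun s _ => uk_val k s)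
  rw [htot]
  simp only [hMdef]
  set f : ℕ → ℝ := fun i => (-1:ℝ)^i * ((M (i+1))^3 - (M i)^3) / 3 with hf
  have hcongr : ∀ i ∈ Finset.range (k+1),
      cc (Tk k) (uk k) i * ((M (i+1))^3 - (M i)^3) / 3 = f i := by
    intro i hi
    rw [hf]
    dsimp only
    rw [uk_cc hk (Nat.lt_succ_iff.mp (Finset.mem_range.mp hi))]
  rw [Finset.sum_congr rfl hcongr]
  -- explicit term values
  have hf0 : f 0 = (1/(2*(k:ℝ)))^3/3 := by
    have h1 : M 1 = (-1:ℝ)^(1+1) * (1/(2*(k:ℝ))) := hMval 1 le_rfl hk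
    rw [hf]
    dsimp only
    rw [hM0, h1]
    norm_num
  have hfk : f k = (1/(2*(k:ℝ)))^3/3 := by
    have h1 : M k = (-1:ℝ)^(k+1) * (1/(2*(k:ℝ))) := hMval k hk le_rfl
    rw [hf]
    dsimp only
    rw [hMn, h1]
    set ε := (-1:ℝ)^k with hε
    have hε2 : ε^2 = 1 := by rw [hε, ← pow_mul]; exact Even.neg_one_pow ⟨k, by ring⟩
    have hp1 : (-1:ℝ)^(k+1) = -ε := by rw [hε, pow_succ]; ring
    rw [hp1]
    linear_combination ((1/(2*(k:ℝ)))^3/3 * (ε^2+1)) * hε2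
  have hinterior : ∀ j ∈ Finset.range (k-1), f (j+1) = 2*(1/(2*(k:ℝ)))^3/3 := by
    intro j hj
    have hjr := Finset.mem_range.mp hj
    have h1 : M (j+1) = (-1:ℝ)^(j+1+1) * (1/(2*(k:ℝ))) := hMval (j+1) (by omega) (by omega)
    have h2 : M (j+1+1) = (-1:ℝ)^(j+1+1+1) * (1/(2*(k:ℝ))) := hMval (j+2) (by omega) (by omega)
    rw [hf]
    dsimp only
    rw [h1, h2]
    set ε := (-1:ℝ)^(j+1) with hε
    have hε2 : ε^2 = 1 := by rw [hε, ← pow_mul]; exact Even.neg_one_pow ⟨j+1, by ring⟩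
    have hp1 : (-1:ℝ)^(j+1+1) = -ε := by rw [hε, pow_succ]; ring
    have hp2 : (-1:ℝ)^(j+1+1+1) = ε := by rw [hε, pow_succ, pow_succ]; ring
    rw [hp1, hp2]
    linear_combination (2*(1/(2*(k:ℝ)))^3/3 * (ε^2+1)) * hε2
  obtain ⟨p, rfl⟩ : ∃ p, k = p+1 := ⟨k-1, by omega⟩
  rw [show p+1+1 = p+2 from rfl, sum_split p f]
  have hint' : ∀ j ∈ Finset.range p, f (j+1) = 2*(1/(2*((p:ℝ)+1)))^3/3 := by
    intro j hj
    have := hinterior j (by simpa using hj)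
    push_cast at this ⊢
    exact this
  rw [Finset.sum_congr rfl hint', Finset.sum_const, Finset.card_range, nsmul_eq_mul]
  rw [hf0, hfk]
  push_cast
  have hq : (0:ℝ) < (p:ℝ)+1 := by positivity
  field_simp
  ring


lemma cube_mono {a b : ℝ} (h : a ≤ b) : a^3 ≤ b^3 := by
  nlinarith [sq_nonneg (a+b), sq_nonneg (a-b), sq_nonneg a, sq_nonneg b]

lemma ae_eq_of_pieces {n : ℕ} {t : ℕ → ℝ} {u v : ℝ → ℝ}
    (ht0 : t 0 = 0) (htn : t n = 1) (hmono : ∀ i < n, t i ≤ t (i+1)) (hn : 1 ≤ n)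
    (hpiece : ∀ i < n, ∀ s ∈ Ioo (t i) (t (i+1)), u s = v s) :
    ∀ᵐ s ∂(volume.restrict (Set.Ioo (0:ℝ) 1)), u s = v s := by
  rw [ae_restrict_iff' measurableSet_Ioo]
  have hnull : volume (⋃ i ∈ Finset.range (n+1), ({t i} : Set ℝ)) = 0 :=
    Set.Countable.measure_zero
      (Set.Countable.biUnion (Finset.countable_toSet _) (fun _ _ => Set.countable_singleton _)) _
  rw [MeasureTheory.ae_iff]
  apply measure_mono_null _ hnull
  intro s hsbad
  simp only [Set.mem_setOf_eq] at hsbad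
  push_neg at hsbad
  obtain ⟨hs01, hneq⟩ := hsbad
  by_contra hnot
  simp only [Set.mem_iUnion, Set.mem_singleton_iff, not_exists] at hnot
  obtain ⟨i, hi, h1, h2⟩ := cover ht0 htn hmono hn (le_of_lt hs01.1) (le_of_lt hs01.2)
  have hne1 : s ≠ t i := fun h => hnot i (Finset.mem_range.mpr (by omega)) h
  have hne2 : s ≠ t (i+1) := fun h => hnot (i+1) (Finset.mem_range.mpr (by omega)) h
  exact hneq (hpiece i hi s ⟨lt_of_le_of_ne h1 (fun h => hne1 h.symm), lt_of_le_of_ne h2 hne2⟩)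

/-- backward direction: if `u = σ·u_k` a.e. then the energy equals `1/(12k²)`. -/
lemma backward {k : ℕ} (hk : 1 ≤ k) (u : ℝ → ℝ) (σ : ℝ) (hσ : σ = 1 ∨ σ = -1)
    (hae : ∀ᵐ s ∂(volume.restrict (Set.Ioo (0:ℝ) 1)), u s = σ * uk k s) :
    ∫ y in (0:ℝ)..1, (∫ s in (0:ℝ)..y, u s)^2 = 1/(12*(k:ℝ)^2) := by
  have hσ2 : σ^2 = 1 := by rcases hσ with h | h <;> rw [h] <;> norm_num
  have hae' : ∀ᵐ s ∂volume, s ∈ Ioo (0:ℝ) 1 → u s = σ * uk k s :=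
    (ae_restrict_iff' measurableSet_Ioo).mp hae
  have hweq : ∀ y ∈ Icc (0:ℝ) 1,
      (∫ s in (0:ℝ)..y, u s) = σ * ∫ s in (0:ℝ)..y, uk k s := by
    intro y hy
    rw [← intervalIntegral.integral_const_mul]
    apply intervalIntegral.integral_congr_ae
    have hney : ∀ᵐ s : ℝ, s ≠ y := by
      rw [MeasureTheory.ae_iff]
      have he : {s : ℝ | ¬ s ≠ y} = {y} := by ext z; simp
      rw [he]; exact Real.volume_singleton
    filter_upwards [hae', hney] with s hs hsy hsmem
    rw [Set.mem_uIoc] at hsmem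
    apply hs
    rcases hsmem with ⟨h4, h5⟩ | ⟨h4, h5⟩
    · exact ⟨h4, lt_of_lt_of_le (lt_of_le_of_ne h5 hsy) hy.2⟩
    · exfalso
      have := hy.1
      linarith
  have hcong : ∫ y in (0:ℝ)..1, (∫ s in (0:ℝ)..y, u s)^2
      = ∫ y in (0:ℝ)..1, (σ * ∫ s in (0:ℝ)..y, uk k s)^2 := by
    apply intervalIntegral.integral_congr
    intro y hy
    rw [Set.uIcc_of_le (by norm_num : (0:ℝ) ≤ 1)] at hy
    dsimp only
    rw [hweq y hy]
  rw [hcong]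
  have hsq : ∀ y : ℝ, (σ * ∫ s in (0:ℝ)..y, uk k s)^2
      = σ^2 * (∫ s in (0:ℝ)..y, uk k s)^2 := fun y => by ring
  simp only [hsq, hσ2, one_mul]
  exact uk_integral_sq hk

/-- forward equality reconstruction -/
lemma forward_eq {k : ℕ} (hk : 1 ≤ k) (u : ℝ → ℝ) (t : ℕ → ℝ)
    (ht0 : t 0 = 0) (htlast : t (k+1) = 1)
    (hmono : ∀ i < k+1, t i ≤ t (i+1))
    (hconst : ∀ i < k+1, ∀ x ∈ Ioo (t i) (t (i+1)), ∀ y ∈ Ioo (t i) (t (i+1)), u x = u y)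
    (huval : ∀ s ∈ Set.Ioo (0 : ℝ) 1, u s = 1 ∨ u s = -1)
    (σ : ℝ) (hσval : σ = 1 ∨ σ = -1)
    (hm1 : (∫ s in (0:ℝ)..t 1, u s) = σ * (1/(2*(k:ℝ))))
    (hpat : ∀ j, 1 ≤ j → j ≤ k →
      (∫ s in (0:ℝ)..t j, u s) = (-1:ℝ)^(j+1) * (∫ s in (0:ℝ)..t 1, u s))
    (hmlast : (∫ s in (0:ℝ)..t (k+1), u s) = 0) :
    ∀ᵐ s ∂(volume.restrict (Set.Ioo (0:ℝ) 1)), u s = σ * uk k s := by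
  have hk0 : (0:ℝ) < (k:ℝ) := by exact_mod_cast Nat.pos_of_ne_zero (by omega)
  set c0 : ℝ := 1/(2*(k:ℝ)) with hc0
  have hc0pos : 0 < c0 := by rw [hc0]; positivity
  set m : ℕ → ℝ := fun j => ∫ s in (0:ℝ)..t j, u s with hm
  have hσne : σ ≠ 0 := by rcases hσval with h | h <;> rw [h] <;> norm_num
  have hσabs : |σ| = 1 := by rcases hσval with h | h <;> rw [h] <;> norm_num
  have hm0 : m 0 = 0 := by
    rw [hm]
    simp only [ht0]
    exact intervalIntegral.integral_same
  set L : ℕ → ℝ := fun i => if i = 0 ∨ i = k then c0 else 2*c0 with hL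
  have hL0 : L 0 = c0 := by simp [hL]
  have hLk : L k = c0 := by simp [hL]
  have hLmid : ∀ i, i ≠ 0 → i ≠ k → L i = 2*c0 := by
    intro i h1 h2
    simp only [hL]
    rw [if_neg (not_or.mpr ⟨h1, h2⟩)]
  have hLpos : ∀ i, 0 < L i := by
    intro i
    by_cases h1 : i = 0
    · rw [h1, hL0]; exact hc0pos
    · by_cases h2 : i = k
      · rw [h2, hLk]; exact hc0pos
      · rw [hLmid i h1 h2]; linarith
  have hDelta : ∀ i, i ≤ k → m (i+1) - m i = σ * (-1:ℝ)^i * L i := by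
    intro i hi
    by_cases h0 : i = 0
    · rw [h0]
      show m 1 - m 0 = σ * (-1:ℝ)^0 * L 0
      rw [hL0, hm0, show m 1 = σ * c0 from hm1]
      norm_num
    · by_cases hks : i = k
      · rw [hks]
        rw [hLk, show m (k+1) = 0 from hmlast,
          show m k = (-1:ℝ)^(k+1) * m 1 from hpat k (by omega) le_rfl,
          show m 1 = σ * c0 from hm1, pow_succ]
        ring
      · rw [hLmid i h0 hks,
          show m (i+1) = (-1:ℝ)^(i+1+1) * m 1 from hpat (i+1) (by omega) (by omega),
          show m i = (-1:ℝ)^(i+1) * m 1 from hpat i (by omega) (by omega),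
          show m 1 = σ * c0 from hm1, pow_succ, pow_succ]
        ring
  have hstepu : ∀ i, i ≤ k → m (i+1) - m i = cc t u i * (t (i+1) - t i) := by
    intro i hi
    exact master_step ht0 htlast hmono (by omega) hconst (show i < k+1 by omega)
  have hlen : ∀ i, i ≤ k → t (i+1) - t i = L i := by
    intro i hi
    have hne : cc t u i * (t (i+1) - t i) ≠ 0 := by
      rw [← hstepu i hi, hDelta i hi]
      exact mul_ne_zero (mul_ne_zero hσne (pow_ne_zero _ (by norm_num))) (hLpos i).ne'
    have hlt : t i < t (i+1) := by
      rcases lt_or_eq_of_le (hmono i (by omega)) with h | h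
      · exact h
      · exfalso; apply hne; rw [← h]; ring
    have hcc : cc t u i = 1 ∨ cc t u i = -1 := ccval ht0 htlast hmono huval (by omega) hlt
    have hccabs : |cc t u i| = 1 := by rcases hcc with h | h <;> rw [h] <;> norm_num
    have heq2 : |cc t u i * (t (i+1) - t i)| = |σ * (-1:ℝ)^i * L i| := by
      rw [← hstepu i hi, hDelta i hi]
    rw [abs_mul, hccabs, one_mul, abs_of_pos (by linarith : (0:ℝ) < t (i+1) - t i),
      abs_mul, abs_mul, hσabs, abs_pow, abs_neg, abs_one, one_pow, one_mul, one_mul,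
      abs_of_pos (hLpos i)] at heq2
    exact heq2
  -- the partition agrees with Tk
  have hTk_step : ∀ j, j ≤ k → Tk k (j+1) = Tk k j + L j := by
    intro j hj
    by_cases h0 : j = 0
    · rw [h0]
      show Tk k 1 = Tk k 0 + L 0
      rw [hL0, Tk_eval0, Tk_eval (le_refl 1) hk, hc0]
      push_cast
      ring
    · by_cases hks : j = k
      · rw [hks]
        rw [hLk, Tk_evaln, Tk_eval (by omega) le_rfl, hc0]
        field_simp
        ring
      · rw [hLmid j h0 hks, Tk_eval (by omega) (by omega : j+1 ≤ k),
          Tk_eval (by omega) (by omega), hc0]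
        push_cast
        field_simp
        ring
  have hteq : ∀ j, j ≤ k+1 → t j = Tk k j := by
    intro j
    induction j with
    | zero => intro _; rw [ht0, Tk_eval0]
    | succ jj ih =>
      intro hj
      have h1 : t (jj+1) = t jj + L jj := by
        have := hlen jj (by omega)
        linarith
      rw [h1, ih (by omega), hTk_step jj (by omega)]
  -- conclusion on pieces
  have hcceq : ∀ i, i ≤ k → cc t u i = σ * (-1:ℝ)^i := by
    intro i hi
    have h1 : cc t u i * L i = σ * (-1:ℝ)^i * L i := by
      rw [← hlen i hi, ← hstepu i hi, hDelta i hi, hlen i hi]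
    exact mul_right_cancel₀ (hLpos i).ne' h1
  apply ae_eq_of_pieces ht0 htlast hmono (by omega)
  intro i hi s hs
  have hik : i ≤ k := by omega
  rw [upiece hconst hi hs, hcceq i hik]
  have hsTk : s ∈ Ioo (Tk k i) (Tk k (i+1)) := by
    rw [← hteq i (by omega), ← hteq (i+1) (by omega)]
    exact hs
  rw [uk_on_piece hk hik hsTk]


end Stmt5

open Stmt5

/-- For a mean-zero `±1`-valued `u` on `(0,1)` with at most `k` jumps,
`∫₀¹ w² ≥ 1/(12k²)` where `w(y) = ∫₀^y u`, with equality iff `u = ±u_k` a.e. -/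
theorem stmt5 (k : ℕ) (hk : 1 ≤ k)
    (u : ℝ → ℝ) (huval : ∀ s ∈ Set.Ioo (0 : ℝ) 1, u s = 1 ∨ u s = -1)
    (t : ℕ → ℝ) (ht0 : t 0 = 0) (htlast : t (k + 1) = 1)
    (htmono : ∀ i, i ≤ k → t i ≤ t (i + 1))
    (hconst : ∀ i, i ≤ k → ∀ x ∈ Set.Ioo (t i) (t (i + 1)),
      ∀ y ∈ Set.Ioo (t i) (t (i + 1)), u x = u y)
    (hmean : ∫ s in (0 : ℝ)..1, u s = 0)
    (w : ℝ → ℝ) (hw : ∀ y, w y = ∫ s in (0 : ℝ)..y, u s) :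
    (∫ y in (0 : ℝ)..1, (w y) ^ 2) ≥ 1 / (12 * (k : ℝ) ^ 2) ∧
    ((∫ y in (0 : ℝ)..1, (w y) ^ 2) = 1 / (12 * (k : ℝ) ^ 2) ↔
      (∀ᵐ s ∂(volume.restrict (Set.Ioo (0 : ℝ) 1)), u s = uk k s) ∨
      (∀ᵐ s ∂(volume.restrict (Set.Ioo (0 : ℝ) 1)), u s = - uk k s)) := by
  obtain ⟨p, rfl⟩ : ∃ p, k = p+1 := ⟨k-1, by omega⟩
  set k := p + 1 with hkdef
  have hk0 : (0:ℝ) < (k:ℝ) := by positivity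
  have hcast : ((k:ℕ):ℝ) = (p:ℝ)+1 := by rw [hkdef]; push_cast; ring
  have hmono' : ∀ i < k+1, t i ≤ t (i+1) := fun i hi => htmono i (by omega)
  have hconst' : ∀ i < k+1, ∀ x ∈ Set.Ioo (t i) (t (i+1)),
      ∀ y ∈ Set.Ioo (t i) (t (i+1)), u x = u y := fun i hi => hconst i (by omega)
  set m : ℕ → ℝ := fun j => ∫ s in (0:ℝ)..t j, u s with hm
  have hmdef : ∀ j, (∫ s in (0:ℝ)..t j, u s) = m j := fun _ => rfl
  have hm0 : m 0 = 0 := by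
    rw [hm]; simp only [ht0]; exact intervalIntegral.integral_same
  have hmlast : m (k+1) = 0 := by
    rw [hm]; simp only [htlast]; exact hmean
  have hstepu : ∀ i, i ≤ k → m (i+1) - m i = cc t u i * (t (i+1) - t i) :=
    fun i hi => master_step ht0 htlast hmono' (by omega) hconst' (show i < k+1 by omega)
  have habs : ∀ i, i ≤ k → |m (i+1) - m i| = t (i+1) - t i := by
    intro i hi
    rcases lt_or_eq_of_le (htmono i hi) with hlt | heq
    · have hcc := ccval ht0 htlast hmono' huval (show i < k+1 by omega) hlt
      rw [hstepu i hi, abs_mul]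
      have h1 : |cc t u i| = 1 := by rcases hcc with h | h <;> rw [h] <;> norm_num
      rw [h1, one_mul, abs_of_pos (by linarith : (0:ℝ) < t (i+1) - t i)]
    · rw [hstepu i hi, ← heq]
      simp
  have hLsum : ∑ j ∈ Finset.range (k+1), |m (j+1) - m j| = 1 := by
    rw [Finset.sum_congr rfl (fun i hi => habs i (Nat.lt_succ_iff.mp (Finset.mem_range.mp hi))),
      Finset.sum_range_sub t (k+1), ht0, htlast]
    norm_num
  have hconv : ∀ i ∈ Finset.range (k+1),
      cc t u i * ((m (i+1))^3 - (m i)^3) / 3 = |(m (i+1))^3 - (m i)^3| / 3 := by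
    intro i hi'
    have hi : i ≤ k := Nat.lt_succ_iff.mp (Finset.mem_range.mp hi')
    rcases lt_or_eq_of_le (htmono i hi) with hlt | heq
    · have hcc := ccval ht0 htlast hmono' huval (show i < k+1 by omega) hlt
      rcases hcc with h | h
      · have hmono3 : (m i)^3 ≤ (m (i+1))^3 := by
          apply cube_mono
          have h6 := hstepu i hi
          rw [h] at h6
          linarith
        rw [h, one_mul, abs_of_nonneg (by linarith)]
      · have hmono3 : (m (i+1))^3 ≤ (m i)^3 := by
          apply cube_mono
          have h6 := hstepu i hi
          rw [h] at h6
          linarith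
        rw [h, abs_of_nonpos (by linarith)]
        ring
    · have h5 : m (i+1) = m i := by
        have h6 := hstepu i hi
        rw [← heq, sub_self, mul_zero] at h6
        linarith
      rw [h5]
      simp
  have hIdent : (∫ y in (0:ℝ)..1, (w y)^2)
      = (∑ j ∈ Finset.range (k+1), |(m (j+1))^3 - (m j)^3|) / 3 := by
    simp only [hw]
    rw [master_total ht0 htlast hmono' (by omega) hconst' huval]
    simp only [hmdef]
    rw [Finset.sum_congr rfl hconv, Finset.sum_div]
  set S : ℝ := ∑ j ∈ Finset.range (k+1), |(m (j+1))^3 - (m j)^3| with hS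
  have hmlast2 : m (p+2) = 0 := hmlast
  have hLsum2 : ∑ j ∈ Finset.range (p+2), |m (j+1) - m j| = 1 := hLsum
  have hdisc := discrete p m hm0 hmlast2 hLsum2
  have hS2 : (∑ j ∈ Finset.range (p+2), |m (j+1)^3 - m j^3|) = S := rfl
  rw [hS2] at hdisc
  constructor
  · rw [ge_iff_le, hIdent, hcast]
    rw [div_le_div_iff₀ (by positivity) (by norm_num)]
    nlinarith [hdisc.1]
  · constructor
    · intro hE
      rw [hIdent, hcast] at hE
      have hSval : S = 3 * (1/(12*((p:ℝ)+1)^2)) := by linarith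
      have h4 : 4*((p:ℝ)+1)^2 * S = 1 := by
        rw [hSval]
        field_simp
        ring
      obtain ⟨hpat', habs1⟩ := hdisc.2 h4
      have hc0' : |m 1| = 1/(2*((k:ℕ):ℝ)) := by rw [hcast]; exact habs1
      rcases (abs_eq (by positivity)).mp hc0' with hs | hs
      · left
        have hfwd := forward_eq (k := k) (by omega) u t ht0 htlast hmono' hconst' huval
          1 (Or.inl rfl)
          (show (∫ s in (0:ℝ)..t 1, u s) = 1 * (1/(2*((k:ℕ):ℝ))) by
            rw [hmdef 1, hs]; ring)
          (fun j h1 h2 => hpat' j h1 (by omega)) hmlast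
        filter_upwards [hfwd] with s hs'
        rw [hs', one_mul]
      · right
        have hfwd := forward_eq (k := k) (by omega) u t ht0 htlast hmono' hconst' huval
          (-1) (Or.inr rfl)
          (show (∫ s in (0:ℝ)..t 1, u s) = (-1) * (1/(2*((k:ℕ):ℝ))) by
            rw [hmdef 1, hs]; ring)
          (fun j h1 h2 => hpat' j h1 (by omega)) hmlast
        filter_upwards [hfwd] with s hs'
        rw [hs']
        ring
    · intro hOr
      simp only [hw]
      rcases hOr with h | h
      · exact backward (by omega) u 1 (Or.inl rfl)
          (by filter_upwards [h] with s hs; rw [hs, one_mul])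
      · exact backward (by omega) u (-1) (Or.inr rfl)
          (by filter_upwards [h] with s hs; rw [hs]; ring)
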